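/- Let H be a complex Hilbert space, let T be a bounded linear operator on H, and let A and B be bounded self-adjoint operators on H that are positive and invertible (i.e., there is c > 0 with A ≥ c·1 and B ≥ c·1). Suppose M₀, M₁ ≥ 0 satisfy ‖T‖ ≤ M₀ and ‖A T B‖ ≤ M₁. Then for every θ ∈ [0, 1], ‖A^θ T B^θ‖ ≤ M₀^{1-θ} M₁^θ, where A^θ and B^θ are the real powers defined by the continuous functional calculus. -/

import Mathlib

open scoped InnerProductSpace
open NormedSpace

section Aux

variable {𝔸 : Type*} [NormedRing 𝔸] [NormOneClass 𝔸] [NormedAlgebra ℂ 𝔸] [CompleteSpace 𝔸]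

/-- The norm of the exponential is at most the exponential of the norm. -/
lemma aux_norm_exp_le (x : 𝔸) : ‖exp x‖ ≤ Real.exp ‖x‖ := by
  rw [exp_eq_tsum ℂ]
  refine (norm_tsum_le_tsum_norm (norm_expSeries_summable' (𝕂 := ℂ) x)).trans ?_
  have hsum : Summable fun n : ℕ => (n.factorial : ℝ)⁻¹ * ‖x‖ ^ n := by
    simpa [div_eq_inv_mul] using Real.summable_pow_div_factorial ‖x‖
  have hle : ∀ n : ℕ, ‖(n.factorial⁻¹ : ℂ) • x ^ n‖ ≤ (n.factorial : ℝ)⁻¹ * ‖x‖ ^ n := by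
    intro n
    rw [norm_smul]
    have h1 : ‖(n.factorial⁻¹ : ℂ)‖ = (n.factorial : ℝ)⁻¹ := by
      simp
    rw [h1]
    gcongr
    exact norm_pow_le x n
  refine (Summable.tsum_le_tsum hle (norm_expSeries_summable' (𝕂 := ℂ) x) hsum).trans_eq ?_
  rw [Real.exp_eq_exp_ℝ, exp_eq_tsum ℝ]
  simp [smul_eq_mul]

variable {H : Type*} [NormedAddCommGroup H] [InnerProductSpace ℂ H] [CompleteSpace H]

noncomputable instance aux_normedAlgebraRat : NormedAlgebra ℚ (H →L[ℂ] H) :=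
  NormedAlgebra.restrictScalars ℚ ℂ _

/-- For selfadjoint `L`, `‖exp (z • L)‖ ≤ exp (|re z| * ‖L‖)`. -/
lemma aux_norm_exp_smul_le [Nontrivial H] (L : H →L[ℂ] H) (hL : IsSelfAdjoint L) (z : ℂ) :
    ‖exp (z • L)‖ ≤ Real.exp (|z.re| * ‖L‖) := by
  have hstar : star (z • L) = (starRingEnd ℂ z) • L := by
    rw [star_smul, hL.star_eq]; rfl
  have hcomm : Commute ((starRingEnd ℂ z) • L) (z • L) :=
    ((Commute.refl L).smul_left _).smul_right _
  have key : star (exp (z • L)) * exp (z • L)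
      = exp (((2 * z.re : ℝ) : ℂ) • L) := by
    rw [star_exp, hstar, ← exp_add_of_commute hcomm, ← add_smul]
    congr 2
    rw [add_comm]
    simpa using Complex.add_conj z
  have h1 : ‖exp (z • L)‖ * ‖exp (z • L)‖ ≤ Real.exp (2 * |z.re| * ‖L‖) := by
    rw [← CStarRing.norm_star_mul_self, key]
    refine (aux_norm_exp_le _).trans_eq ?_
    rw [norm_smul]
    have h0 : ‖((2 * z.re : ℝ) : ℂ)‖ = |2 * z.re| := by
      rw [Complex.norm_real, Real.norm_eq_abs]
    rw [h0, abs_mul, abs_two]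
  have h2 : Real.exp (2 * |z.re| * ‖L‖)
      = Real.exp (|z.re| * ‖L‖) * Real.exp (|z.re| * ‖L‖) := by
    rw [← Real.exp_add]; congr 1; ring
  nlinarith [norm_nonneg (exp (z • L)), Real.exp_pos (|z.re| * ‖L‖)]

set_option maxHeartbeats 1000000 in
/-- Real scalar multiples of selfadjoint operators are selfadjoint. -/
lemma aux_isSelfAdjoint_smul (r : ℝ) (L : H →L[ℂ] H) (hL : IsSelfAdjoint L) :
    IsSelfAdjoint (r • L) := by
  rw [← Complex.coe_smul, IsSelfAdjoint, star_smul, Complex.star_def, Complex.conj_ofReal,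
    hL.star_eq]

/-- Lower bound on the real spectrum from the quadratic-form lower bound. -/
lemma aux_spec_lower (A : H →L[ℂ] H) (hA : IsSelfAdjoint A) (c : ℝ)
    (hAc : ∀ φ : H, c * ‖φ‖ ^ 2 ≤ (⟪φ, A φ⟫_ℂ).re) :
    ∀ x ∈ spectrum ℝ A, c ≤ x := by
  intro x hx
  have h1 : (A - algebraMap ℝ (H →L[ℂ] H) c).IsPositive := by
    refine ⟨(hA.sub ?_).isSymmetric, fun φ => ?_⟩
    · have hmap1 : algebraMap ℝ (H →L[ℂ] H) c = (c : ℂ) • (1 : H →L[ℂ] H) := by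
        rw [Algebra.algebraMap_eq_smul_one, ← Complex.coe_smul]
      rw [hmap1, IsSelfAdjoint]
      rw [star_smul, Complex.star_def, Complex.conj_ofReal, star_one]
    · have hmap : (algebraMap ℝ (H →L[ℂ] H) c) φ = (c : ℂ) • φ := by
        rw [Algebra.algebraMap_eq_smul_one]
        simp [← Complex.coe_smul]
      rw [ContinuousLinearMap.reApplyInnerSelf_apply, ContinuousLinearMap.sub_apply, hmap,
        inner_sub_left, inner_smul_left, map_sub]
      have h2 : RCLike.re ((starRingEnd ℂ) ((c : ℝ) : ℂ) * ⟪φ, φ⟫_ℂ) = c * ‖φ‖ ^ 2 := by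
        rw [Complex.conj_ofReal]
        rw [RCLike.re_to_complex, Complex.mul_re, Complex.ofReal_re, Complex.ofReal_im,
          zero_mul, sub_zero, ← RCLike.re_to_complex, inner_self_eq_norm_sq]
      rw [h2]
      have h3 : RCLike.re ⟪A φ, φ⟫_ℂ = (⟪φ, A φ⟫_ℂ).re := by
        rw [inner_re_symm, RCLike.re_to_complex]
      rw [h3]
      linarith [hAc φ]
  have h4 := SpectrumRestricts.nnreal_iff.mp h1.spectrumRestricts
  have hmem : x - c ∈ spectrum ℝ (A - algebraMap ℝ (H →L[ℂ] H) c) := by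
    rw [← spectrum.sub_singleton_eq]
    exact Set.sub_mem_sub hx rfl
  linarith [h4 _ hmem]

end Aux

set_option maxHeartbeats 1000000 in
/-- Operator interpolation: if `T` is bounded, `A, B` are self-adjoint, positive and
invertible (bounded below by `c • 1` with `c > 0`), `‖T‖ ≤ M₀` and `‖A T B‖ ≤ M₁`,
then for every `θ ∈ [0,1]`, `‖A^θ T B^θ‖ ≤ M₀^(1-θ) M₁^θ`, the real powers being
defined by the continuous functional calculus. -/
theorem stmt_9 {H : Type*} [NormedAddCommGroup H] [InnerProductSpace ℂ H]
    [CompleteSpace H] (T A B : H →L[ℂ] H)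
    (hA : IsSelfAdjoint A) (hB : IsSelfAdjoint B)
    (c : ℝ) (hc : 0 < c)
    (hAc : ∀ φ : H, c * ‖φ‖ ^ 2 ≤ (⟪φ, A φ⟫_ℂ).re)
    (hBc : ∀ φ : H, c * ‖φ‖ ^ 2 ≤ (⟪φ, B φ⟫_ℂ).re)
    (M₀ M₁ : ℝ) (hM₀ : 0 ≤ M₀) (hM₁ : 0 ≤ M₁)
    (hT : ‖T‖ ≤ M₀) (hATB : ‖A * T * B‖ ≤ M₁)
    (θ : ℝ) (hθ0 : 0 ≤ θ) (hθ1 : θ ≤ 1) :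
    ‖cfc (fun x : ℝ => x ^ θ) A * T * cfc (fun x : ℝ => x ^ θ) B‖
      ≤ M₀ ^ (1 - θ) * M₁ ^ θ := by
  rcases subsingleton_or_nontrivial H with hH | hH
  · have h0 : (cfc (fun x : ℝ => x ^ θ) A * T * cfc (fun x : ℝ => x ^ θ) B) = 0 :=
      Subsingleton.elim _ _
    rw [h0, norm_zero]
    positivity
  -- notation
  set LA := cfc Real.log A with hLAdef
  set LB := cfc Real.log B with hLBdef
  have hsLA : IsSelfAdjoint LA := cfc_predicate _ _
  have hsLB : IsSelfAdjoint LB := cfc_predicate _ _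
  have hspecA : ∀ x ∈ spectrum ℝ A, c ≤ x := aux_spec_lower A hA c hAc
  have hspecB : ∀ x ∈ spectrum ℝ B, c ≤ x := aux_spec_lower B hB c hBc
  have hposA : ∀ x ∈ spectrum ℝ A, 0 < x := fun x hx => hc.trans_le (hspecA x hx)
  have hposB : ∀ x ∈ spectrum ℝ B, 0 < x := fun x hx => hc.trans_le (hspecB x hx)
  set F : ℂ → (H →L[ℂ] H) := fun z => exp (z • LA) * T * exp (z • LB) with hFdef
  -- `F θ` is the operator under consideration
  have hcfc : ∀ (C : H →L[ℂ] H), IsSelfAdjoint C → (∀ x ∈ spectrum ℝ C, 0 < x) →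
      cfc (fun x : ℝ => x ^ θ) C = exp ((θ : ℂ) • cfc Real.log C) := by
    intro C hC hpos
    have hne : ∀ x ∈ spectrum ℝ C, x ≠ 0 := fun x hx => (hpos x hx).ne'
    have hlogC : ContinuousOn (fun x : ℝ => θ * Real.log x) (spectrum ℝ C) := by
      fun_prop (disch := assumption)
    calc cfc (fun x : ℝ => x ^ θ) C
        = cfc (Real.exp ∘ fun x : ℝ => θ * Real.log x) C := by
          refine cfc_congr fun x hx => ?_
          simp only [Function.comp_apply]
          rw [Real.rpow_def_of_pos (hpos x hx), mul_comm]
      _ = cfc Real.exp (cfc (fun x : ℝ => θ * Real.log x) C) :=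
          cfc_comp' Real.exp _ C Real.continuous_exp.continuousOn hlogC
      _ = cfc Real.exp (θ • cfc Real.log C) := by
          rw [cfc_const_mul θ Real.log C (by fun_prop (disch := assumption))]
      _ = exp (θ • cfc Real.log C) :=
          CFC.real_exp_eq_normedSpace_exp
            (aux_isSelfAdjoint_smul θ _ (cfc_predicate Real.log C))
      _ = exp ((θ : ℂ) • cfc Real.log C) := by
          rw [Complex.coe_smul]
  -- exponential at 1 recovers the operator
  have hexpA1 : exp ((1 : ℂ) • LA) = A := by
    rw [one_smul, hLAdef]
    rw [← CFC.real_exp_eq_normedSpace_exp (cfc_predicate _ _),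
      ← cfc_comp' Real.exp Real.log A Real.continuous_exp.continuousOn
        (Real.continuousOn_log.mono fun x hx => (hposA x hx).ne')]
    conv_rhs => rw [← cfc_id (R := ℝ) A]
    exact cfc_congr fun x hx => Real.exp_log (hposA x hx)
  have hexpB1 : exp ((1 : ℂ) • LB) = B := by
    rw [one_smul, hLBdef]
    rw [← CFC.real_exp_eq_normedSpace_exp (cfc_predicate _ _),
      ← cfc_comp' Real.exp Real.log B Real.continuous_exp.continuousOn
        (Real.continuousOn_log.mono fun x hx => (hposB x hx).ne')]
    conv_rhs => rw [← cfc_id (R := ℝ) B]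
    exact cfc_congr fun x hx => Real.exp_log (hposB x hx)
  -- differentiability
  have hdiff : Differentiable ℂ F := by
    have h1 : Differentiable ℂ fun z : ℂ => exp (z • LA) :=
      fun z => (hasDerivAt_exp_smul_const LA z).differentiableAt
    have h2 : Differentiable ℂ fun z : ℂ => exp (z • LB) :=
      fun z => (hasDerivAt_exp_smul_const LB z).differentiableAt
    exact (h1.mul (differentiable_const T)).mul h2
  -- bound on the strip
  have hbound : ∀ z : ℂ, ‖F z‖
      ≤ Real.exp (|z.re| * ‖LA‖) * ‖T‖ * Real.exp (|z.re| * ‖LB‖) := by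
    intro z
    calc ‖F z‖ ≤ ‖exp (z • LA) * T‖ * ‖exp (z • LB)‖ := norm_mul_le _ _
      _ ≤ ‖exp (z • LA)‖ * ‖T‖ * ‖exp (z • LB)‖ := by
          gcongr; exact norm_mul_le _ _
      _ ≤ Real.exp (|z.re| * ‖LA‖) * ‖T‖ * Real.exp (|z.re| * ‖LB‖) := by
          gcongr
          · exact aux_norm_exp_smul_le LA hsLA z
          · exact aux_norm_exp_smul_le LB hsLB z
  -- edge bounds
  have hedge0 : ∀ z ∈ Complex.re ⁻¹' {(0 : ℝ)}, ‖F z‖ ≤ M₀ := by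
    intro z hz
    have hz0 : z.re = 0 := hz
    have := hbound z
    rw [hz0] at this
    simpa using this.trans (by simpa using hT)
  have hedge1 : ∀ z ∈ Complex.re ⁻¹' {(1 : ℝ)}, ‖F z‖ ≤ M₁ := by
    intro z hz
    have hz1 : z.re = 1 := hz
    have hFz : F z = exp ((z - 1) • LA) * (A * T * B) * exp ((z - 1) • LB) := by
      have hA' : exp (z • LA) = exp ((z - 1) • LA) * A := by
        rw [← hexpA1, ← exp_add_of_commute (((Commute.refl LA).smul_left _).smul_right _),
          ← add_smul, sub_add_cancel]
      have hB' : exp (z • LB) = B * exp ((z - 1) • LB) := by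
        rw [← hexpB1, ← exp_add_of_commute (((Commute.refl LB).smul_left _).smul_right _),
          ← add_smul, add_sub_cancel]
      rw [hFdef]
      simp only []
      rw [hA', hB']
      noncomm_ring
    have hUA : ‖exp ((z - 1) • LA)‖ ≤ 1 := by
      have := aux_norm_exp_smul_le LA hsLA (z - 1)
      simpa [Complex.sub_re, hz1] using this
    have hUB : ‖exp ((z - 1) • LB)‖ ≤ 1 := by
      have := aux_norm_exp_smul_le LB hsLB (z - 1)
      simpa [Complex.sub_re, hz1] using this
    calc ‖F z‖ = ‖exp ((z - 1) • LA) * (A * T * B) * exp ((z - 1) • LB)‖ := by rw [hFz]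
      _ ≤ ‖exp ((z - 1) • LA) * (A * T * B)‖ * ‖exp ((z - 1) • LB)‖ := norm_mul_le _ _
      _ ≤ ‖exp ((z - 1) • LA)‖ * ‖A * T * B‖ * ‖exp ((z - 1) • LB)‖ := by
          gcongr; exact norm_mul_le _ _
      _ ≤ 1 * M₁ * 1 :=
          mul_le_mul (mul_le_mul hUA hATB (norm_nonneg _) zero_le_one) hUB
            (norm_nonneg _) (by positivity)
      _ = M₁ := by ring
  -- boundedness on the closed strip
  have hB' : BddAbove ((norm ∘ F) '' Complex.HadamardThreeLines.verticalClosedStrip 0 1) := by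
    refine ⟨Real.exp ‖LA‖ * ‖T‖ * Real.exp ‖LB‖, ?_⟩
    rintro r ⟨z, hz, rfl⟩
    have hz' : z.re ∈ Set.Icc (0 : ℝ) 1 := hz
    have habs : |z.re| ≤ 1 := abs_le.mpr ⟨by linarith [hz'.1], hz'.2⟩
    refine (hbound z).trans ?_
    have hLA1 : |z.re| * ‖LA‖ ≤ ‖LA‖ := by
      nlinarith [norm_nonneg LA, abs_nonneg z.re]
    have hLB1 : |z.re| * ‖LB‖ ≤ ‖LB‖ := by
      nlinarith [norm_nonneg LB, abs_nonneg z.re]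
    gcongr
  -- Hadamard three lines
  have hz : (θ : ℂ) ∈ Complex.HadamardThreeLines.verticalClosedStrip 0 1 := by
    simpa [Complex.HadamardThreeLines.verticalClosedStrip] using
      Set.mem_Icc.mpr ⟨hθ0, hθ1⟩
  have hmain := Complex.HadamardThreeLines.norm_le_interp_of_mem_verticalClosedStrip' zero_lt_one hz
    hdiff.diffContOnCl hB' hedge0 hedge1
  rw [Complex.ofReal_re, sub_zero, sub_zero, div_one] at hmain
  calc ‖cfc (fun x : ℝ => x ^ θ) A * T * cfc (fun x : ℝ => x ^ θ) B‖
      = ‖F (θ : ℂ)‖ := by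
        rw [hcfc A hA hposA, hcfc B hB hposB]
    _ ≤ M₀ ^ (1 - θ) * M₁ ^ θ := hmain
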